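/- Regularity preserving with a quantitative contraction: In the regular-graph group-interaction model, assume α_i(t) = α_t for all i and t, and |N_i^s ∩ N_j^s| ≥ 2r/3 for every edge (i,j) of G. If the profile at time t equals G, i.e. ‖x_i(t) − x_j(t)‖ ≤ ε for every edge (i,j), then the profile at time t+1 equals G; moreover, with A_t = sup over edges (i,j) of ‖x_i(t) − x_j(t)‖ and m = inf over edges (i,j) of |N_i^s ∩ N_j^s|, one has A_{t+1} ≤ (A_t / r) · ( r − (3m − 2r)(1 − α_t) ). -/

import Mathlib

open Finset
open scoped Classical

/-- The closed social neighborhood `N_i^s = {i} ∪ {j : (i,j) ∈ E}` of vertex `i`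
in a locally finite simple graph `G` on `ℤ⁺`. -/
noncomputable def closedNbhd (G : SimpleGraph ℕ+) [∀ v, Fintype (G.neighborSet v)]
    (i : ℕ+) : Finset ℕ+ :=
  insert i (G.neighborFinset i)

/-- The update neighborhood under group interaction:
`N_i(t) = {j : j = i, or (i,j) ∈ E and ‖x_i(t) − x_j(t)‖ ≤ ε}`. -/
noncomputable def updNbhd {d : ℕ} (G : SimpleGraph ℕ+) [∀ v, Fintype (G.neighborSet v)]
    (ε : ℝ) (x : ℕ → ℕ+ → EuclideanSpace ℝ (Fin d)) (t : ℕ) (i : ℕ+) : Finset ℕ+ :=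
  (closedNbhd G i).filter fun j => j = i ∨ (G.Adj i j ∧ ‖x t i - x t j‖ ≤ ε)

/-- **Regularity preserving with a quantitative contraction.** Let `G` be an
`(r−1)`-regular locally finite simple graph on `ℤ⁺`, let all stubbornness levels
coincide (`α_i(t) = α_t`), and assume `|N_i^s ∩ N_j^s| ≥ 2r/3` for every edge `(i,j)`.
If the profile at time `t` equals `G` (i.e. `‖x_i(t) − x_j(t)‖ ≤ ε` for every edge),
then the profile at time `t+1` equals `G`, and moreover, with
`A_t = sup_{(i,j) ∈ E} ‖x_i(t) − x_j(t)‖` and `m = inf_{(i,j) ∈ E} |N_i^s ∩ N_j^s|`,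
one has `A_{t+1} ≤ (A_t / r) · (r − (3m − 2r)(1 − α_t))`. -/
theorem regularity_preserving (d r : ℕ) (hd : 1 ≤ d) (hr : 1 ≤ r)
    (ε : ℝ) (hε : 0 < ε)
    (G : SimpleGraph ℕ+) [∀ v, Fintype (G.neighborSet v)] [DecidableRel G.Adj]
    (hreg : ∀ i, G.degree i = r - 1)
    (x : ℕ → ℕ+ → EuclideanSpace ℝ (Fin d)) (α : ℕ → ℝ)
    (hα : ∀ t, α t ∈ Set.Icc (0 : ℝ) 1)
    (hcommon : ∀ i j, G.Adj i j →
      (2 * r : ℝ) / 3 ≤ ((closedNbhd G i ∩ closedNbhd G j).card : ℝ))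
    (hdyn : ∀ t i, x (t + 1) i =
      α t • x t i + ((1 - α t) / ((updNbhd G ε x t i).card : ℝ)) •
        ∑ k ∈ updNbhd G ε x t i, x t k)
    (t : ℕ) (hprof : ∀ i j, G.Adj i j → ‖x t i - x t j‖ ≤ ε) :
    (∀ i j, G.Adj i j → ‖x (t + 1) i - x (t + 1) j‖ ≤ ε) ∧
    (⨆ p : {p : ℕ+ × ℕ+ // G.Adj p.1 p.2}, ‖x (t + 1) p.val.1 - x (t + 1) p.val.2‖) ≤
      ((⨆ p : {p : ℕ+ × ℕ+ // G.Adj p.1 p.2}, ‖x t p.val.1 - x t p.val.2‖) / (r : ℝ)) *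
        ((r : ℝ) -
          (3 * (⨅ p : {p : ℕ+ × ℕ+ // G.Adj p.1 p.2},
              ((closedNbhd G p.val.1 ∩ closedNbhd G p.val.2).card : ℝ)) - 2 * r) *
            (1 - α t)) := by

  obtain ⟨hα0, hα1⟩ := hα t
  have hrpos : (0:ℝ) < r := by exact_mod_cast hr
  have hcardN : ∀ i, (closedNbhd G i).card = r := by
    intro i
    have h1 : i ∉ G.neighborFinset i := by simp
    have h2 : (G.neighborFinset i).card = r - 1 := by
      rw [G.card_neighborFinset_eq_degree]; exact hreg i
    rw [closedNbhd, Finset.card_insert_of_notMem h1, h2]; omega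
  have hupd : ∀ i, updNbhd G ε x t i = closedNbhd G i := by
    intro i
    ext j
    simp only [updNbhd, Finset.mem_filter]
    constructor
    · exact fun h => h.1
    · intro hj
      refine ⟨hj, ?_⟩
      rcases Finset.mem_insert.1 hj with h | h
      · exact Or.inl h
      · have hadj := (G.mem_neighborFinset i j).1 h
        exact Or.inr ⟨hadj, hprof i j hadj⟩
  have hbdd : BddAbove (Set.range fun p : {p : ℕ+ × ℕ+ // G.Adj p.1 p.2} =>
      ‖x t p.val.1 - x t p.val.2‖) := by
    refine ⟨ε, ?_⟩
    rintro _ ⟨p, rfl⟩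
    exact hprof _ _ p.2
  set A : ℝ := ⨆ p : {p : ℕ+ × ℕ+ // G.Adj p.1 p.2}, ‖x t p.val.1 - x t p.val.2‖ with hA
  set m : ℝ := ⨅ p : {p : ℕ+ × ℕ+ // G.Adj p.1 p.2},
      ((closedNbhd G p.val.1 ∩ closedNbhd G p.val.2).card : ℝ) with hm
  have hle : ∀ p : {p : ℕ+ × ℕ+ // G.Adj p.1 p.2}, ‖x t p.val.1 - x t p.val.2‖ ≤ A := by
    intro p; rw [hA]; exact le_ciSup hbdd p
  have hAε : A ≤ ε := by
    rw [hA]; exact Real.iSup_le (fun p => hprof _ _ p.2) hε.le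
  have hA0 : 0 ≤ A := by
    rw [hA]; exact Real.iSup_nonneg fun p => norm_nonneg _
  have hmbdd : BddBelow (Set.range fun p : {p : ℕ+ × ℕ+ // G.Adj p.1 p.2} =>
      ((closedNbhd G p.val.1 ∩ closedNbhd G p.val.2).card : ℝ)) := by
    refine ⟨0, ?_⟩; rintro _ ⟨p, rfl⟩; positivity
  have hmle : ∀ p : {p : ℕ+ × ℕ+ // G.Adj p.1 p.2},
      m ≤ ((closedNbhd G p.val.1 ∩ closedNbhd G p.val.2).card : ℝ) := by
    intro p; rw [hm]; exact ciInf_le hmbdd p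
  -- the core per-edge estimate
  have hcore : ∀ i j, G.Adj i j → ‖x (t+1) i - x (t+1) j‖ ≤
      (A / r) * ((r:ℝ) - (3 * ((closedNbhd G i ∩ closedNbhd G j).card : ℝ) - 2 * r) * (1 - α t)) := by
    intro i j hij
    set S := closedNbhd G i ∩ closedNbhd G j with hS
    set Di := closedNbhd G i \ S with hDi
    set Dj := closedNbhd G j \ S with hDj
    have hSi : S ⊆ closedNbhd G i := Finset.inter_subset_left
    have hSj : S ⊆ closedNbhd G j := Finset.inter_subset_right
    have hiS : i ∈ S := Finset.mem_inter.2 ⟨Finset.mem_insert_self _ _,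
      Finset.mem_insert_of_mem ((G.mem_neighborFinset j i).2 hij.symm)⟩
    have hjS : j ∈ S := Finset.mem_inter.2 ⟨Finset.mem_insert_of_mem
      ((G.mem_neighborFinset i j).2 hij), Finset.mem_insert_self _ _⟩
    have hsr : S.card ≤ r := by rw [← hcardN i]; exact Finset.card_le_card hSi
    have hci : Di.card = r - S.card := by rw [hDi, Finset.card_sdiff_of_subset hSi, hcardN]
    have hcj : Dj.card = r - S.card := by rw [hDj, Finset.card_sdiff_of_subset hSj, hcardN]
    have hcc : Dj.card = Di.card := by rw [hci, hcj]
    have hics : (Di.card : ℝ) = (r:ℝ) - (S.card : ℝ) := by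
      rw [hci, Nat.cast_sub hsr]
    have hβ0 : (0:ℝ) ≤ (1 - α t) / (r:ℝ) := div_nonneg (by linarith) hrpos.le
    have e1 : (∑ k ∈ Di, x t k) + ∑ k ∈ S, x t k = ∑ k ∈ closedNbhd G i, x t k :=
      Finset.sum_sdiff hSi
    have e2 : (∑ k ∈ Dj, x t k) + ∑ k ∈ S, x t k = ∑ k ∈ closedNbhd G j, x t k :=
      Finset.sum_sdiff hSj
    have e3 : ∑ k ∈ Di, (x t k - x t i) = (∑ k ∈ Di, x t k) - (Di.card : ℝ) • x t i := by
      rw [Finset.sum_sub_distrib, Finset.sum_const, Nat.cast_smul_eq_nsmul]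
    have e4 : ∑ k ∈ Dj, (x t k - x t j) = (∑ k ∈ Dj, x t k) - (Di.card : ℝ) • x t j := by
      rw [Finset.sum_sub_distrib, Finset.sum_const, hcc, Nat.cast_smul_eq_nsmul]
    have key : x (t+1) i - x (t+1) j
        = (α t + (1 - α t) / (r:ℝ) * ((Di.card : ℝ))) • (x t i - x t j)
          + ((1 - α t) / (r:ℝ)) • (∑ k ∈ Di, (x t k - x t i))
          - ((1 - α t) / (r:ℝ)) • (∑ k ∈ Dj, (x t k - x t j)) := by
      rw [hdyn t i, hdyn t j, hupd i, hupd j, hcardN i, hcardN j, ← e1, ← e2, e3, e4]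
      module
    have hAij : ‖x t i - x t j‖ ≤ A := hle ⟨(i, j), hij⟩
    have hAi : ∀ k ∈ Di, ‖x t k - x t i‖ ≤ A := by
      intro k hk
      have hk' := Finset.mem_sdiff.1 hk
      have hkne : k ≠ i := fun h => hk'.2 (h ▸ hiS)
      rcases Finset.mem_insert.1 hk'.1 with h | h
      · exact absurd h hkne
      · exact hle ⟨(k, i), ((G.mem_neighborFinset i k).1 h).symm⟩
    have hAj : ∀ k ∈ Dj, ‖x t k - x t j‖ ≤ A := by
      intro k hk
      have hk' := Finset.mem_sdiff.1 hk
      have hkne : k ≠ j := fun h => hk'.2 (h ▸ hjS)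
      rcases Finset.mem_insert.1 hk'.1 with h | h
      · exact absurd h hkne
      · exact hle ⟨(k, j), ((G.mem_neighborFinset j k).1 h).symm⟩
    have hn1 : ‖∑ k ∈ Di, (x t k - x t i)‖ ≤ (Di.card : ℝ) * A := by
      calc ‖∑ k ∈ Di, (x t k - x t i)‖ ≤ ∑ k ∈ Di, ‖x t k - x t i‖ := norm_sum_le _ _
        _ ≤ Di.card • A := Finset.sum_le_card_nsmul _ _ _ hAi
        _ = (Di.card : ℝ) * A := by rw [nsmul_eq_mul]
    have hn2 : ‖∑ k ∈ Dj, (x t k - x t j)‖ ≤ (Di.card : ℝ) * A := by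
      calc ‖∑ k ∈ Dj, (x t k - x t j)‖ ≤ ∑ k ∈ Dj, ‖x t k - x t j‖ := norm_sum_le _ _
        _ ≤ Dj.card • A := Finset.sum_le_card_nsmul _ _ _ hAj
        _ = (Di.card : ℝ) * A := by rw [hcc, nsmul_eq_mul]
    have hcoef0 : (0:ℝ) ≤ α t + (1 - α t) / (r:ℝ) * (Di.card : ℝ) :=
      add_nonneg hα0 (mul_nonneg hβ0 (Nat.cast_nonneg _))
    have hnorm : ‖x (t+1) i - x (t+1) j‖ ≤
        (α t + (1 - α t) / (r:ℝ) * (Di.card : ℝ)) * A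
        + (1 - α t) / (r:ℝ) * ((Di.card : ℝ) * A)
        + (1 - α t) / (r:ℝ) * ((Di.card : ℝ) * A) := by
      rw [key]
      calc ‖(α t + (1 - α t) / (r:ℝ) * ((Di.card : ℝ))) • (x t i - x t j)
            + ((1 - α t) / (r:ℝ)) • (∑ k ∈ Di, (x t k - x t i))
            - ((1 - α t) / (r:ℝ)) • (∑ k ∈ Dj, (x t k - x t j))‖
          ≤ ‖(α t + (1 - α t) / (r:ℝ) * ((Di.card : ℝ))) • (x t i - x t j)
            + ((1 - α t) / (r:ℝ)) • (∑ k ∈ Di, (x t k - x t i))‖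
            + ‖((1 - α t) / (r:ℝ)) • (∑ k ∈ Dj, (x t k - x t j))‖ := norm_sub_le _ _
        _ ≤ ‖(α t + (1 - α t) / (r:ℝ) * ((Di.card : ℝ))) • (x t i - x t j)‖
            + ‖((1 - α t) / (r:ℝ)) • (∑ k ∈ Di, (x t k - x t i))‖
            + ‖((1 - α t) / (r:ℝ)) • (∑ k ∈ Dj, (x t k - x t j))‖ := by
              gcongr; exact norm_add_le _ _
        _ ≤ (α t + (1 - α t) / (r:ℝ) * (Di.card : ℝ)) * A
            + (1 - α t) / (r:ℝ) * ((Di.card : ℝ) * A)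
            + (1 - α t) / (r:ℝ) * ((Di.card : ℝ) * A) := by
              gcongr ?_ + ?_ + ?_
              · rw [norm_smul, Real.norm_eq_abs, abs_of_nonneg hcoef0]
                exact mul_le_mul_of_nonneg_left hAij hcoef0
              · rw [norm_smul, Real.norm_eq_abs, abs_of_nonneg hβ0]
                exact mul_le_mul_of_nonneg_left hn1 hβ0
              · rw [norm_smul, Real.norm_eq_abs, abs_of_nonneg hβ0]
                exact mul_le_mul_of_nonneg_left hn2 hβ0
    rw [hics] at hnorm
    have heq : (α t + (1 - α t) / (r:ℝ) * ((r:ℝ) - (S.card : ℝ))) * A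
        + (1 - α t) / (r:ℝ) * (((r:ℝ) - (S.card : ℝ)) * A)
        + (1 - α t) / (r:ℝ) * (((r:ℝ) - (S.card : ℝ)) * A)
        = (A / r) * ((r:ℝ) - (3 * ((S.card : ℕ) : ℝ) - 2 * r) * (1 - α t)) := by
      field_simp
      ring
    rw [heq] at hnorm
    exact hnorm
  constructor
  · intro i j hij
    have h1 := hcore i j hij
    have h2 := hcommon i j hij
    have hsr' : ((closedNbhd G i ∩ closedNbhd G j).card : ℝ) ≤ (r:ℝ) := by
      have : (closedNbhd G i ∩ closedNbhd G j).card ≤ r := by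
        rw [← hcardN i]; exact Finset.card_le_card Finset.inter_subset_left
      exact_mod_cast this
    have hAr : 0 ≤ A / (r:ℝ) := div_nonneg hA0 hrpos.le
    have hX : 0 ≤ (3 * ((closedNbhd G i ∩ closedNbhd G j).card : ℝ) - 2 * r) * (1 - α t) :=
      mul_nonneg (by linarith) (by linarith)
    have hA' : (A / r) * ((r:ℝ) - (3 * ((closedNbhd G i ∩ closedNbhd G j).card : ℝ) - 2 * r) * (1 - α t)) ≤ A := by
      rw [div_mul_eq_mul_div, div_le_iff₀ hrpos]
      nlinarith [hA0, hX]
    linarith [h1, hA', hAε]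
  · rcases isEmpty_or_nonempty {p : ℕ+ × ℕ+ // G.Adj p.1 p.2} with hE | hE
    · haveI := hE
      have hA' : A = 0 := by rw [hA]; exact Real.iSup_of_isEmpty _
      have hL : (⨆ p : {p : ℕ+ × ℕ+ // G.Adj p.1 p.2},
          ‖x (t + 1) p.val.1 - x (t + 1) p.val.2‖) = 0 := Real.iSup_of_isEmpty _
      rw [hL, hA']
      simp
    · haveI := hE
      obtain ⟨p0⟩ := hE
      have hm23 : (2 * r : ℝ) / 3 ≤ m := by
        rw [hm]; exact le_ciInf fun p => hcommon _ _ p.2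
      have hmr : m ≤ (r:ℝ) := by
        refine le_trans (hmle p0) ?_
        have : (closedNbhd G p0.val.1 ∩ closedNbhd G p0.val.2).card ≤ r := by
          rw [← hcardN p0.val.1]; exact Finset.card_le_card Finset.inter_subset_left
        exact_mod_cast this
      have hRHS0 : 0 ≤ (A / r) * ((r:ℝ) - (3 * m - 2 * r) * (1 - α t)) := by
        have h1 : 0 ≤ A / r := div_nonneg hA0 hrpos.le
        have h2 : (0:ℝ) ≤ 3 * m - 2 * r := by linarith
        have hfac : (0:ℝ) ≤ (r:ℝ) - (3 * m - 2 * r) * (1 - α t) := by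
          nlinarith [mul_nonneg h2 hα0]
        exact mul_nonneg h1 hfac
      refine Real.iSup_le (fun p => ?_) hRHS0
      refine le_trans (hcore p.val.1 p.val.2 p.2) ?_
      have hms := hmle p
      have h1 : 0 ≤ A / r := div_nonneg hA0 hrpos.le
      have h2 : ((r:ℝ) - (3 * ((closedNbhd G p.val.1 ∩ closedNbhd G p.val.2).card : ℝ) - 2 * r) * (1 - α t))
          ≤ ((r:ℝ) - (3 * m - 2 * r) * (1 - α t)) := by
        nlinarith [mul_nonneg (show (0:ℝ) ≤ ((closedNbhd G p.val.1 ∩ closedNbhd G p.val.2).card : ℝ) - m by linarith) (show (0:ℝ) ≤ 1 - α t by linarith)]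
      exact mul_le_mul_of_nonneg_left h2 h1
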